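/- For every feasible solution of the constructed arrears instance I′ and for every i = 1,…,n, either X ∩ Y_i = T_i or X ∩ Y_i = T̄_i. -/

import Mathlib

/-! Construction of the arrears instance `I′` from a 1-IN-3SAT instance with `n`
variables and `m` clauses, where clause `j` has literals `c j 0, c j 1, c j 2`, a literal
being a pair `(i, pos)` meaning `xᵢ` if `pos = true` and `¬xᵢ` if `pos = false`. -/

/-- The base `B = 100 n² m²`. -/
def Bval (n m : ℕ) : ℕ := 100 * n ^ 2 * m ^ 2

/-- `N = 3m(m+2) + 1`. -/
def Nval (m : ℕ) : ℕ := 3 * m * (m + 2) + 1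

/-- The items: `Sum.inl (i, j, k, pos)` is `u_{i,j,k}` (if `pos = true`) or `ū_{i,j,k}`
(if `pos = false`); `Sum.inr (i, l, pos)` is `w_{i,l}` or `w̄_{i,l}`. -/
abbrev Item (n m : ℕ) :=
  (Fin n × Fin m × Fin 3 × Bool) ⊕ (Fin n × Fin (3 * m * (m + 1) + 1) × Bool)

/-- The variable index of an item. -/
def itemVar {n m : ℕ} : Item n m → Fin n
  | Sum.inl (i, _, _, _) => i
  | Sum.inr (i, _, _) => i

/-- The polarity of an item (`true` for the `u`/`w` items, `false` for `ū`/`w̄`). -/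
def itemPos {n m : ℕ} : Item n m → Bool
  | Sum.inl (_, _, _, pos) => pos
  | Sum.inr (_, _, pos) => pos

/-- First payment amount of `u_{i,j,k}`. -/
def pu (n m : ℕ) (c : Fin m → Fin 3 → Fin n × Bool) (i : Fin n) (j : Fin m) (k : Fin 3) : ℕ :=
  (Bval n m ^ 2 + ((i : ℕ) + 1)) * (Bval n m + 1) * Bval n m +
    (if c j k = (i, true) then (j : ℕ) + 2 else 0)

/-- First payment amount of `ū_{i,j,k}`. -/
def pub (n m : ℕ) (c : Fin m → Fin 3 → Fin n × Bool) (i : Fin n) (j : Fin m) (k : Fin 3) : ℕ :=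
  (Bval n m ^ 2 + ((i : ℕ) + 1)) * Bval n m ^ 2 +
    (if c j k = (i, false) then (j : ℕ) + 2 else 0)

/-- `K_i = Σ_{u ∈ U_i} (p_{u,1} mod B)`. -/
def Kv (n m : ℕ) (c : Fin m → Fin 3 → Fin n × Bool) (i : Fin n) : ℕ :=
  ∑ j : Fin m, ∑ k : Fin 3, pu n m c i j k % Bval n m

/-- `K̄_i = Σ_{u ∈ Ū_i} (p_{u,1} mod B)`. -/
def Kbv (n m : ℕ) (c : Fin m → Fin 3 → Fin n × Bool) (i : Fin n) : ℕ :=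
  ∑ j : Fin m, ∑ k : Fin 3, pub n m c i j k % Bval n m

/-- The first payment amount `p_{y,1}` of each item `y` (the second amount is `2 p_{y,1}`). -/
def p1 (n m : ℕ) (c : Fin m → Fin 3 → Fin n × Bool) : Item n m → ℕ
  | Sum.inl (i, j, k, pos) => if pos then pu n m c i j k else pub n m c i j k
  | Sum.inr (i, l, pos) =>
      if pos then
        if (l : ℕ) + 1 ≤ 3 * m * (m + 1) - Kv n m c i then
          (Bval n m ^ 2 + ((i : ℕ) + 1)) * (Bval n m + 1) * Bval n m + 1
        else (Bval n m ^ 2 + ((i : ℕ) + 1)) * (Bval n m + 1) * Bval n m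
      else
        if (l : ℕ) + 1 ≤ 3 * m * (m + 1) - Kbv n m c i then
          (Bval n m ^ 2 + ((i : ℕ) + 1)) * Bval n m ^ 2 + 1
        else if (l : ℕ) + 1 ≤ 3 * m * (m + 1) then
          (Bval n m ^ 2 + ((i : ℕ) + 1)) * Bval n m ^ 2
        else (Bval n m ^ 2 + ((i : ℕ) + 1)) * (Bval n m + Nval m) * Bval n m

/-- The first payment date `a_{y,1}`: day `i` for the items of variable `xᵢ`. -/
def a1 {n m : ℕ} (y : Item n m) : ℕ := (itemVar y : ℕ) + 1

/-- The second payment date `a_{y,2}`. -/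
def a2 (n m : ℕ) (c : Fin m → Fin 3 → Fin n × Bool) : Item n m → ℕ
  | Sum.inl (i, j, k, pos) => if c j k = (i, pos) then n + 2 + ((j : ℕ) + 1) else n + 1
  | Sum.inr (i, l, pos) =>
      if pos then
        if (l : ℕ) + 1 ≤ 3 * m * (m + 1) - Kv n m c i then n + 2 else n + 1
      else
        if (l : ℕ) + 1 ≤ 3 * m * (m + 1) - Kbv n m c i then n + 2 else n + 1

/-- `R = N(B+1)(nB² + n(n+1)/2)B + 3m(m+1)n`. -/
def Rval (n m : ℕ) : ℕ :=
  Nval m * (Bval n m + 1) * (n * Bval n m ^ 2 + n * (n + 1) / 2) * Bval n m +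
    3 * m * (m + 1) * n

/-- The budget amount `q_i` of the budget constraint on day `i`, for `1 ≤ i ≤ n+m+2`. -/
def qv (n m : ℕ) (i : ℕ) : ℕ :=
  if i < n then Nval m * (Bval n m + 1) * i * Bval n m ^ 3 + (Bval n m ^ 3 - 1)
  else if i = n then Rval n m
  else if i = n + 1 then
    (Nval m * n + 6 * m * n + 2 * n + m * (m + 1)) * Bval n m ^ 4 + (Bval n m ^ 4 - 1)
  else if i ≤ n + m + 1 then
    (3 * Nval m * n - 2 * (n + m + 2 - i)) * Bval n m ^ 4 + (Bval n m ^ 4 - 1)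
  else 3 * Rval n m

/-- A solution of the arrears instance chooses for every item `y` one of its two options
(`z y = true` means the second option `(a_{y,2}, 2 p_{y,1})` is chosen); it is feasible if
every budget constraint is satisfied. -/
def Feasible (n m : ℕ) (c : Fin m → Fin 3 → Fin n × Bool) (z : Item n m → Bool) : Prop :=
  ∀ i : ℕ, 1 ≤ i → i ≤ n + m + 2 →
    (∑ y : Item n m,
      if (if z y then a2 n m c y else a1 y) ≤ i then
        (if z y then 2 * p1 n m c y else p1 n m c y) else 0) ≤ qv n m i

/-- `X`: the set of items for which the second option is chosen. -/
def Xset (n m : ℕ) (z : Item n m → Bool) : Finset (Item n m) :=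
  Finset.univ.filter fun y => z y = true

/-- `T_i = U_i ∪ W_i`: the positive items of variable `xᵢ`. -/
def Tset (n m : ℕ) (i : Fin n) : Finset (Item n m) :=
  Finset.univ.filter fun y => itemVar y = i ∧ itemPos y = true

/-- `T̄_i = Ū_i ∪ W̄_i`: the negative items of variable `xᵢ`. -/
def Tbar (n m : ℕ) (i : Fin n) : Finset (Item n m) :=
  Finset.univ.filter fun y => itemVar y = i ∧ itemPos y = false

/-- `Y_i = T_i ∪ T̄_i`: all items of variable `xᵢ`. -/
def Yset (n m : ℕ) (i : Fin n) : Finset (Item n m) :=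
  Finset.univ.filter fun y => itemVar y = i

/-- `Z_j`: the items whose second payment date is `n + 1 + j`. -/
def Zset (n m : ℕ) (c : Fin m → Fin 3 → Fin n × Bool) (j : ℕ) : Finset (Item n m) :=
  Finset.univ.filter fun y => a2 n m c y = n + 1 + j
open Finset

/-! ### Generic sum helpers -/

lemma fin_sum_ite {n : ℕ} (i0 : ℕ) (h : i0 < n) (f : Fin n → ℕ) :
    (∑ i : Fin n, if (i : ℕ) = i0 then f i else 0) = f ⟨i0, h⟩ := by
  rw [Finset.sum_eq_single ⟨i0, h⟩]
  · simp
  · intro b _ hb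
    rw [if_neg]
    intro hc
    exact hb (Fin.ext hc)
  · simp

lemma sum_fin_ite_le (M a v1 v2 : ℕ) (ha : a ≤ M) :
    (∑ l : Fin (M + 1), if (l : ℕ) + 1 ≤ a then v1 else v2) = a * v1 + (M + 1 - a) * v2 := by
  rw [Fin.sum_univ_eq_sum_range (fun l => if l + 1 ≤ a then v1 else v2) (M + 1)]
  rw [Finset.sum_ite]
  have h1 : Finset.filter (fun l => l + 1 ≤ a) (Finset.range (M + 1)) = Finset.range a := by
    ext x; simp only [Finset.mem_filter, Finset.mem_range]; omega
  have h2 : Finset.filter (fun l => ¬(l + 1 ≤ a)) (Finset.range (M + 1)) = Finset.Ico a (M + 1) := by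
    ext x; simp only [Finset.mem_filter, Finset.mem_range, Finset.mem_Ico]; omega
  rw [h1, h2, Finset.sum_const, Finset.sum_const, Finset.card_range, Nat.card_Ico,
    smul_eq_mul, smul_eq_mul]

lemma sum_range_ite_le {v n : ℕ} (hv : v ≤ n) (f : ℕ → ℕ) :
    (∑ i ∈ Finset.range n, if i + 1 ≤ v then f i else 0) = ∑ i ∈ Finset.range v, f i := by
  rw [← Finset.sum_subset (Finset.range_subset_range.2 hv)
    (fun i _ hi => by rw [if_neg]; simp only [Finset.mem_range] at hi; omega)]
  apply Finset.sum_congr rfl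
  intro i hi
  rw [if_pos]
  exact Finset.mem_range.1 hi

lemma two_Gs (n : ℕ) : 2 * (∑ i ∈ Finset.range n, (i + 1)) = n * (n + 1) := by
  induction n with
  | zero => simp
  | succ k ih =>
    rw [Finset.sum_range_succ, Nat.mul_add, ih]
    ring

/-! ### Weight/residue decomposition -/

/-- The "weight" of an item: `p_{y,1} = (B² + i + 1)·B·wt y + res y`. -/
def wtf (n m : ℕ) : Item n m → ℕ
  | Sum.inl (_, _, _, pos) => if pos then Bval n m + 1 else Bval n m
  | Sum.inr (_, l, pos) =>
      if pos then Bval n m + 1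
      else if (l : ℕ) + 1 ≤ 3 * m * (m + 1) then Bval n m else Bval n m + Nval m

/-- The "residue" of an item. -/
def resf (n m : ℕ) (c : Fin m → Fin 3 → Fin n × Bool) : Item n m → ℕ
  | Sum.inl (i, j, k, pos) => if c j k = (i, pos) then (j : ℕ) + 2 else 0
  | Sum.inr (i, l, pos) =>
      if pos then (if (l : ℕ) + 1 ≤ 3 * m * (m + 1) - Kv n m c i then 1 else 0)
      else (if (l : ℕ) + 1 ≤ 3 * m * (m + 1) - Kbv n m c i then 1 else 0)

/-- Whether an item is the special item `w̄_{i, 3m(m+1)+1}`. -/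
def isSp (n m : ℕ) : Item n m → Bool
  | Sum.inl _ => false
  | Sum.inr (_, l, _) => (l : ℕ) == 3 * m * (m + 1)

lemma p1_decomp (n m : ℕ) (c : Fin m → Fin 3 → Fin n × Bool) (y : Item n m) :
    p1 n m c y = (Bval n m ^ 2 + (itemVar y : ℕ) + 1) * Bval n m * wtf n m y
      + resf n m c y := by
  rcases y with ⟨i, j, k, pos⟩ | ⟨i, l, pos⟩
  · cases pos <;> simp only [p1, wtf, resf, itemVar, pu, pub, if_true, if_false,
      Bool.false_eq_true, ite_false, ite_true] <;> split_ifs <;> ring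
  · cases pos
    · simp only [p1, wtf, resf, itemVar, Bool.false_eq_true, if_false]
      have hle : 3 * m * (m + 1) - Kbv n m c i ≤ 3 * m * (m + 1) := Nat.sub_le _ _
      split_ifs <;> first | (exfalso; omega) | ring
    · simp only [p1, wtf, resf, itemVar, if_true]
      split_ifs <;> ring

lemma wtf_pos {n m : ℕ} (y : Item n m) (h : itemPos y = true) :
    wtf n m y = Bval n m + 1 := by
  rcases y with ⟨i, j, k, pos⟩ | ⟨i, l, pos⟩ <;> simp only [itemPos] at h <;>
    simp [wtf, h]

lemma wtf_neg {n m : ℕ} (y : Item n m) (h : itemPos y = false) :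
    wtf n m y = Bval n m + Nval m * (if isSp n m y then 1 else 0) := by
  rcases y with ⟨i, j, k, pos⟩ | ⟨i, l, pos⟩ <;> simp only [itemPos] at h <;> subst h
  · simp [wtf, isSp]
  · have hl := l.isLt
    simp only [wtf, isSp, Bool.false_eq_true, if_false, beq_iff_eq]
    split_ifs <;> omega

/-! ### Arithmetic bounds -/

lemma B_ge (n m : ℕ) (hn : 0 < n) (hm : 0 < m) : 100 * m ^ 2 ≤ Bval n m := by
  have h1 : 1 ≤ n ^ 2 := Nat.one_le_pow _ _ hn
  unfold Bval
  nlinarith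

lemma B_pos (n m : ℕ) (hn : 0 < n) (hm : 0 < m) : 0 < Bval n m := by
  have := B_ge n m hn hm
  nlinarith

lemma N_le (m : ℕ) (hm : 0 < m) : Nval m ≤ 10 * m ^ 2 := by
  unfold Nval; nlinarith

lemma N_lt_B (n m : ℕ) (hn : 0 < n) (hm : 0 < m) : Nval m < Bval n m := by
  have h1 := B_ge n m hn hm
  have h2 := N_le m hm
  nlinarith

lemma m1_lt_B (n m : ℕ) (hn : 0 < n) (hm : 0 < m) : m + 2 ≤ Bval n m := by
  have h1 := B_ge n m hn hm
  nlinarith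

lemma res_n_lt_B (n m : ℕ) (hn : 0 < n) (hm : 0 < m) : 6 * m * (m + 1) * n < Bval n m := by
  obtain ⟨a, rfl⟩ : ∃ a, n = a + 1 := ⟨n - 1, by omega⟩
  obtain ⟨b, rfl⟩ : ∃ b, m = b + 1 := ⟨m - 1, by omega⟩
  unfold Bval
  nlinarith [sq_nonneg a, sq_nonneg b, sq_nonneg (a*b), Nat.zero_le (a*b)]

lemma key_lt_B2 (n m : ℕ) (hn : 0 < n) (hm : 0 < m) :
    n * n * (Nval m * (Bval n m + 1)) < Bval n m ^ 2 := by
  have h2 := N_le m hm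
  have h3 := B_ge n m hn hm
  have h4 : Bval n m + 1 ≤ 2 * Bval n m := by have := B_pos n m hn hm; omega
  have h5 : n * n * (Nval m * (Bval n m + 1)) ≤ n * n * (10 * m ^ 2 * (2 * Bval n m)) := by
    apply Nat.mul_le_mul_left
    apply Nat.mul_le_mul h2 h4
  calc n * n * (Nval m * (Bval n m + 1)) ≤ n * n * (10 * m ^ 2 * (2 * Bval n m)) := h5
    _ < Bval n m ^ 2 := by
      unfold Bval
      have e1 : 1 ≤ n ^ 4 := Nat.one_le_pow _ _ hn
      have e2 : 1 ≤ m ^ 4 := Nat.one_le_pow _ _ hm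
      nlinarith [e1, e2, Nat.mul_le_mul e1 e2]

lemma sumY_wt (n m : ℕ) (i0 : ℕ) (h : i0 < n) :
    (∑ y : Item n m, if (itemVar y : ℕ) = i0 then wtf n m y else 0)
      = 2 * Nval m * (Bval n m + 1) := by
  rw [Fintype.sum_sum_type]
  simp only [Fintype.sum_prod_type, Fintype.sum_bool, itemVar, wtf]
  simp only [if_true, Bool.false_eq_true, if_false]
  simp only [Finset.sum_add_distrib, Finset.sum_ite_irrel, Finset.sum_const_zero,
    Finset.sum_const, Finset.card_univ, Fintype.card_fin, smul_eq_mul]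
  simp only [sum_fin_ite_le (3 * m * (m + 1)) (3 * m * (m + 1)) (Bval n m)
    (Bval n m + Nval m) le_rfl]
  rw [fin_sum_ite i0 h, fin_sum_ite i0 h, fin_sum_ite i0 h, fin_sum_ite i0 h]
  simp only [Nat.add_sub_cancel_left]
  unfold Nval
  ring

/-! ### The residue sums `K` -/

lemma pu_mod (n m : ℕ) (hn : 0 < n) (hm : 0 < m) (c : Fin m → Fin 3 → Fin n × Bool)
    (i : Fin n) (j : Fin m) (k : Fin 3) :
    pu n m c i j k % Bval n m = if c j k = (i, true) then (j : ℕ) + 2 else 0 := by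
  have hB := m1_lt_B n m hn hm
  have hj := j.isLt
  rw [show pu n m c i j k = Bval n m * ((Bval n m ^ 2 + ((i : ℕ) + 1)) * (Bval n m + 1))
      + (if c j k = (i, true) then (j : ℕ) + 2 else 0) from by unfold pu; ring,
    Nat.mul_add_mod]
  apply Nat.mod_eq_of_lt
  split_ifs <;> omega

lemma pub_mod (n m : ℕ) (hn : 0 < n) (hm : 0 < m) (c : Fin m → Fin 3 → Fin n × Bool)
    (i : Fin n) (j : Fin m) (k : Fin 3) :
    pub n m c i j k % Bval n m = if c j k = (i, false) then (j : ℕ) + 2 else 0 := by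
  have hB := m1_lt_B n m hn hm
  have hj := j.isLt
  rw [show pub n m c i j k = Bval n m * ((Bval n m ^ 2 + ((i : ℕ) + 1)) * Bval n m)
      + (if c j k = (i, false) then (j : ℕ) + 2 else 0) from by unfold pub; ring,
    Nat.mul_add_mod]
  apply Nat.mod_eq_of_lt
  split_ifs <;> omega

lemma Kv_eq (n m : ℕ) (hn : 0 < n) (hm : 0 < m) (c : Fin m → Fin 3 → Fin n × Bool)
    (i : Fin n) :
    Kv n m c i = ∑ j : Fin m, ∑ k : Fin 3, (if c j k = (i, true) then (j : ℕ) + 2 else 0) := by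
  unfold Kv
  exact Finset.sum_congr rfl fun j _ => Finset.sum_congr rfl fun k _ => pu_mod n m hn hm c i j k

lemma Kbv_eq (n m : ℕ) (hn : 0 < n) (hm : 0 < m) (c : Fin m → Fin 3 → Fin n × Bool)
    (i : Fin n) :
    Kbv n m c i = ∑ j : Fin m, ∑ k : Fin 3, (if c j k = (i, false) then (j : ℕ) + 2 else 0) := by
  unfold Kbv
  exact Finset.sum_congr rfl fun j _ => Finset.sum_congr rfl fun k _ => pub_mod n m hn hm c i j k

lemma sum_j2 (m : ℕ) (hm : 0 < m) :
    (∑ j : Fin m, ∑ k : Fin 3, ((j : ℕ) + 2)) ≤ 3 * m * (m + 1) := by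
  have h1 : (∑ j : Fin m, ∑ k : Fin 3, ((j : ℕ) + 2))
      = 3 * (∑ j ∈ Finset.range m, (j + 1)) + 3 * m := by
    simp only [Finset.sum_const, Finset.card_univ, Fintype.card_fin, smul_eq_mul]
    rw [Fin.sum_univ_eq_sum_range (fun j => 3 * (j + 2)) m]
    rw [show (fun j => 3 * (j + 2)) = fun j => 3 * (j + 1) + 3 from by funext j; ring]
    rw [Finset.sum_add_distrib, ← Finset.mul_sum, Finset.sum_const, Finset.card_range,
      smul_eq_mul]
    ring
  have hG := two_Gs m
  have hmm : m ≤ m * m := Nat.le_mul_of_pos_left m hm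
  nlinarith [hG, hmm]

lemma Kv_le (n m : ℕ) (hn : 0 < n) (hm : 0 < m) (c : Fin m → Fin 3 → Fin n × Bool)
    (i : Fin n) : Kv n m c i ≤ 3 * m * (m + 1) := by
  rw [Kv_eq n m hn hm c i]
  refine le_trans ?_ (sum_j2 m hm)
  apply Finset.sum_le_sum; intro j _; apply Finset.sum_le_sum; intro k _
  split_ifs <;> omega

lemma Kbv_le (n m : ℕ) (hn : 0 < n) (hm : 0 < m) (c : Fin m → Fin 3 → Fin n × Bool)
    (i : Fin n) : Kbv n m c i ≤ 3 * m * (m + 1) := by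
  rw [Kbv_eq n m hn hm c i]
  refine le_trans ?_ (sum_j2 m hm)
  apply Finset.sum_le_sum; intro j _; apply Finset.sum_le_sum; intro k _
  split_ifs <;> omega

lemma sumY_res (n m : ℕ) (hn : 0 < n) (hm : 0 < m) (c : Fin m → Fin 3 → Fin n × Bool)
    (i0 : ℕ) (h : i0 < n) :
    (∑ y : Item n m, if (itemVar y : ℕ) = i0 then resf n m c y else 0)
      = 6 * m * (m + 1) := by
  rw [Fintype.sum_sum_type]
  simp only [Fintype.sum_prod_type, Fintype.sum_bool, itemVar, itemPos, resf, isSp,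
    ite_and, beq_iff_eq, if_true, Bool.false_eq_true, Bool.true_eq_false, if_false, ite_self,
    Finset.sum_add_distrib, Finset.sum_ite_irrel, Finset.sum_const_zero,
    Finset.sum_const, Finset.card_univ, Fintype.card_fin, smul_eq_mul]
  simp only [fin_sum_ite i0 h]
  rw [← Kv_eq n m hn hm c ⟨i0, h⟩, ← Kbv_eq n m hn hm c ⟨i0, h⟩]
  rw [sum_fin_ite_le _ _ _ _ (Nat.sub_le (3 * m * (m + 1)) (Kv n m c ⟨i0, h⟩)),
    sum_fin_ite_le _ _ _ _ (Nat.sub_le (3 * m * (m + 1)) (Kbv n m c ⟨i0, h⟩))]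
  have h1 := Kv_le n m hn hm c ⟨i0, h⟩
  have h2 := Kbv_le n m hn hm c ⟨i0, h⟩
  have h6 : 6 * m * (m + 1) = 2 * (3 * m * (m + 1)) := by ring
  rw [h6]
  generalize 3 * m * (m + 1) = M at h1 h2 ⊢
  omega

lemma cntPos (n m : ℕ) (i0 : ℕ) (h : i0 < n) :
    (∑ y : Item n m, if (itemVar y : ℕ) = i0 ∧ itemPos y = true then 1 else 0)
      = Nval m := by
  rw [Fintype.sum_sum_type]
  simp only [Fintype.sum_prod_type, Fintype.sum_bool, itemVar, itemPos, resf, isSp,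
    ite_and, beq_iff_eq, if_true, Bool.false_eq_true, Bool.true_eq_false, if_false, ite_self,
    Finset.sum_add_distrib, Finset.sum_ite_irrel, Finset.sum_const_zero,
    Finset.sum_const, Finset.card_univ, Fintype.card_fin, smul_eq_mul]
  simp only [fin_sum_ite i0 h]
  unfold Nval
  ring

lemma cntNeg (n m : ℕ) (i0 : ℕ) (h : i0 < n) :
    (∑ y : Item n m, if (itemVar y : ℕ) = i0 ∧ itemPos y = false then 1 else 0)
      = Nval m := by
  rw [Fintype.sum_sum_type]
  simp only [Fintype.sum_prod_type, Fintype.sum_bool, itemVar, itemPos, resf, isSp,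
    ite_and, beq_iff_eq, if_true, Bool.false_eq_true, Bool.true_eq_false, if_false, ite_self,
    Finset.sum_add_distrib, Finset.sum_ite_irrel, Finset.sum_const_zero,
    Finset.sum_const, Finset.card_univ, Fintype.card_fin, smul_eq_mul]
  simp only [fin_sum_ite i0 h]
  unfold Nval
  ring

lemma cntSp (n m : ℕ) (i0 : ℕ) (h : i0 < n) :
    (∑ y : Item n m,
      if (itemVar y : ℕ) = i0 ∧ itemPos y = false ∧ isSp n m y = true then 1 else 0)
      = 1 := by
  rw [Fintype.sum_sum_type]
  simp only [Fintype.sum_prod_type, Fintype.sum_bool, itemVar, itemPos, resf, isSp,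
    ite_and, beq_iff_eq, if_true, Bool.false_eq_true, Bool.true_eq_false, if_false, ite_self,
    Finset.sum_add_distrib, Finset.sum_ite_irrel, Finset.sum_const_zero,
    Finset.sum_const, Finset.card_univ, Fintype.card_fin, smul_eq_mul]
  simp only [fin_sum_ite i0 h]
  simp only [fin_sum_ite (3 * m * (m + 1)) (Nat.lt_succ_self (3 * m * (m + 1)))]
  omega

/-! ### Per-variable quantities of a solution -/

/-- Total weight of the delayed items of variable `i0`. -/
def aF (n m : ℕ) (z : Item n m → Bool) (i0 : ℕ) : ℕ :=
  ∑ y : Item n m, if (itemVar y : ℕ) = i0 ∧ z y = true then wtf n m y else 0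

/-- Total residue of the delayed items of variable `i0`. -/
def rF (n m : ℕ) (c : Fin m → Fin 3 → Fin n × Bool) (z : Item n m → Bool) (i0 : ℕ) : ℕ :=
  ∑ y : Item n m, if (itemVar y : ℕ) = i0 ∧ z y = true then resf n m c y else 0

/-- Total first payment of the delayed items of variable `i0`. -/
def dF (n m : ℕ) (c : Fin m → Fin 3 → Fin n × Bool) (z : Item n m → Bool) (i0 : ℕ) : ℕ :=
  ∑ y : Item n m, if (itemVar y : ℕ) = i0 ∧ z y = true then p1 n m c y else 0

/-- Total first payment of the non-delayed items of variable `i0`. -/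
def eF (n m : ℕ) (c : Fin m → Fin 3 → Fin n × Bool) (z : Item n m → Bool) (i0 : ℕ) : ℕ :=
  ∑ y : Item n m, if (itemVar y : ℕ) = i0 ∧ z y = false then p1 n m c y else 0

/-- Number of delayed positive items of variable `i0`. -/
def sF (n m : ℕ) (z : Item n m → Bool) (i0 : ℕ) : ℕ :=
  ∑ y : Item n m,
    if (itemVar y : ℕ) = i0 ∧ itemPos y = true ∧ z y = true then 1 else 0

/-- Number of delayed negative items of variable `i0`. -/
def tF (n m : ℕ) (z : Item n m → Bool) (i0 : ℕ) : ℕ :=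
  ∑ y : Item n m,
    if (itemVar y : ℕ) = i0 ∧ itemPos y = false ∧ z y = true then 1 else 0

/-- Whether the special item of variable `i0` is delayed. -/
def epsF (n m : ℕ) (z : Item n m → Bool) (i0 : ℕ) : ℕ :=
  ∑ y : Item n m,
    if (itemVar y : ℕ) = i0 ∧ itemPos y = false ∧ isSp n m y = true ∧ z y = true then 1
    else 0

lemma dF_decomp (n m : ℕ) (c : Fin m → Fin 3 → Fin n × Bool) (z : Item n m → Bool)
    (i0 : ℕ) :
    dF n m c z i0 = (Bval n m ^ 2 + i0 + 1) * Bval n m * aF n m z i0 + rF n m c z i0 := by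
  unfold dF aF rF
  rw [Finset.mul_sum, ← Finset.sum_add_distrib]
  apply Finset.sum_congr rfl
  intro y _
  by_cases hP : (itemVar y : ℕ) = i0 ∧ z y = true
  · rw [if_pos hP, if_pos hP, if_pos hP, p1_decomp n m c y, hP.1]
  · rw [if_neg hP, if_neg hP, if_neg hP]
    simp

lemma ed_split (n m : ℕ) (c : Fin m → Fin 3 → Fin n × Bool) (z : Item n m → Bool)
    (i0 : ℕ) :
    eF n m c z i0 + dF n m c z i0
      = ∑ y : Item n m, if (itemVar y : ℕ) = i0 then p1 n m c y else 0 := by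
  unfold eF dF
  rw [← Finset.sum_add_distrib]
  apply Finset.sum_congr rfl
  intro y _
  by_cases hA : (itemVar y : ℕ) = i0 <;> cases hzy : z y <;> simp [hA, hzy]

lemma yP_eq (n m : ℕ) (hn : 0 < n) (hm : 0 < m) (c : Fin m → Fin 3 → Fin n × Bool)
    (i0 : ℕ) (h : i0 < n) :
    (∑ y : Item n m, if (itemVar y : ℕ) = i0 then p1 n m c y else 0)
      = (Bval n m ^ 2 + i0 + 1) * Bval n m * (2 * Nval m * (Bval n m + 1))
        + 6 * m * (m + 1) := by
  have key : (∑ y : Item n m, if (itemVar y : ℕ) = i0 then p1 n m c y else 0)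
      = (Bval n m ^ 2 + i0 + 1) * Bval n m
          * (∑ y : Item n m, if (itemVar y : ℕ) = i0 then wtf n m y else 0)
        + (∑ y : Item n m, if (itemVar y : ℕ) = i0 then resf n m c y else 0) := by
    rw [Finset.mul_sum, ← Finset.sum_add_distrib]
    apply Finset.sum_congr rfl
    intro y _
    by_cases hA : (itemVar y : ℕ) = i0
    · rw [if_pos hA, if_pos hA, if_pos hA, p1_decomp n m c y, hA]
    · rw [if_neg hA, if_neg hA, if_neg hA]; simp
  rw [key, sumY_wt n m i0 h, sumY_res n m hn hm c i0 h]

lemma aF_le (n m : ℕ) (z : Item n m → Bool) (i0 : ℕ) (h : i0 < n) :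
    aF n m z i0 ≤ 2 * Nval m * (Bval n m + 1) := by
  rw [← sumY_wt n m i0 h]
  apply Finset.sum_le_sum
  intro y _
  split_ifs with h1 h2
  · exact le_rfl
  · exact absurd h1.1 h2
  · exact Nat.zero_le _
  · exact le_rfl

lemma rF_le (n m : ℕ) (hn : 0 < n) (hm : 0 < m) (c : Fin m → Fin 3 → Fin n × Bool)
    (z : Item n m → Bool) (i0 : ℕ) (h : i0 < n) :
    rF n m c z i0 ≤ 6 * m * (m + 1) := by
  rw [← sumY_res n m hn hm c i0 h]
  apply Finset.sum_le_sum
  intro y _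
  split_ifs with h1 h2
  · exact le_rfl
  · exact absurd h1.1 h2
  · exact Nat.zero_le _
  · exact le_rfl

lemma sF_le (n m : ℕ) (z : Item n m → Bool) (i0 : ℕ) (h : i0 < n) :
    sF n m z i0 ≤ Nval m := by
  rw [← cntPos n m i0 h]
  apply Finset.sum_le_sum
  intro y _
  split_ifs with h1 h2
  · exact le_rfl
  · exact absurd ⟨h1.1, h1.2.1⟩ h2
  · exact Nat.zero_le _
  · exact le_rfl

lemma tF_le (n m : ℕ) (z : Item n m → Bool) (i0 : ℕ) (h : i0 < n) :
    tF n m z i0 ≤ Nval m := by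
  rw [← cntNeg n m i0 h]
  apply Finset.sum_le_sum
  intro y _
  split_ifs with h1 h2
  · exact le_rfl
  · exact absurd ⟨h1.1, h1.2.1⟩ h2
  · exact Nat.zero_le _
  · exact le_rfl

lemma epsF_le (n m : ℕ) (z : Item n m → Bool) (i0 : ℕ) (h : i0 < n) :
    epsF n m z i0 ≤ 1 := by
  rw [← cntSp n m i0 h]
  apply Finset.sum_le_sum
  intro y _
  split_ifs with h1 h2
  · exact le_rfl
  · exact absurd ⟨h1.1, h1.2.1, h1.2.2.1⟩ h2
  · exact Nat.zero_le _
  · exact le_rfl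

lemma aF_split (n m : ℕ) (z : Item n m → Bool) (i0 : ℕ) :
    aF n m z i0 = (Bval n m + 1) * sF n m z i0 + Bval n m * tF n m z i0
      + Nval m * epsF n m z i0 := by
  unfold aF sF tF epsF
  rw [Finset.mul_sum, Finset.mul_sum, Finset.mul_sum, ← Finset.sum_add_distrib,
    ← Finset.sum_add_distrib]
  apply Finset.sum_congr rfl
  intro y _
  by_cases hP : (itemVar y : ℕ) = i0 ∧ z y = true
  · obtain ⟨hA, hzy⟩ := hP
    rw [if_pos ⟨hA, hzy⟩]
    cases hpos : itemPos y
    · rw [wtf_neg y hpos]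
      cases hsp : isSp n m y <;> simp [hA, hzy, hpos, hsp]
    · rw [wtf_pos y hpos]
      simp [hA, hzy, hpos]
  · have h1 : ¬((itemVar y : ℕ) = i0 ∧ itemPos y = true ∧ z y = true) :=
      fun hc => hP ⟨hc.1, hc.2.2⟩
    have h2 : ¬((itemVar y : ℕ) = i0 ∧ itemPos y = false ∧ z y = true) :=
      fun hc => hP ⟨hc.1, hc.2.2⟩
    have h3 : ¬((itemVar y : ℕ) = i0 ∧ itemPos y = false ∧ isSp n m y = true ∧ z y = true) :=
      fun hc => hP ⟨hc.1, hc.2.2.2⟩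
    rw [if_neg hP, if_neg h1, if_neg h2, if_neg h3]
    simp

/-! ### Regrouping sums by variable -/

lemma swap_var (n m : ℕ) (P : Item n m → Prop) [DecidablePred P] (F : Item n m → ℕ) :
    (∑ y : Item n m, if P y then F y else 0)
      = ∑ i0 ∈ Finset.range n, ∑ y : Item n m,
          if (itemVar y : ℕ) = i0 ∧ P y then F y else 0 := by
  rw [Finset.sum_comm]
  apply Finset.sum_congr rfl
  intro y _
  by_cases hP : P y
  · simp only [hP, and_true, if_true]
    rw [Finset.sum_ite_eq (Finset.range n) ((itemVar y : ℕ)) (fun _ => F y),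
      if_pos (Finset.mem_range.2 (Fin.is_lt _))]
  · simp [hP]

lemma swap_var0 (n m : ℕ) (F : Item n m → ℕ) :
    (∑ y : Item n m, F y)
      = ∑ i0 ∈ Finset.range n, ∑ y : Item n m,
          if (itemVar y : ℕ) = i0 then F y else 0 := by
  rw [Finset.sum_comm]
  apply Finset.sum_congr rfl
  intro y _
  rw [Finset.sum_ite_eq (Finset.range n) ((itemVar y : ℕ)) (fun _ => F y),
    if_pos (Finset.mem_range.2 (Fin.is_lt _))]

lemma swap_day (n m : ℕ) (c : Fin m → Fin 3 → Fin n × Bool) (z : Item n m → Bool) (v : ℕ) :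
    (∑ y : Item n m, if z y = false ∧ (itemVar y : ℕ) + 1 ≤ v then p1 n m c y else 0)
      = ∑ i0 ∈ Finset.range n, if i0 + 1 ≤ v then eF n m c z i0 else 0 := by
  rw [swap_var n m (fun y => z y = false ∧ (itemVar y : ℕ) + 1 ≤ v) (p1 n m c)]
  apply Finset.sum_congr rfl
  intro i0 _
  unfold eF
  by_cases hv : i0 + 1 ≤ v
  · rw [if_pos hv]
    apply Finset.sum_congr rfl
    intro y _
    by_cases hA : (itemVar y : ℕ) = i0
    · simp [hA, hv]
    · simp [hA]
  · rw [if_neg hv]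
    apply Finset.sum_eq_zero
    intro y _
    rw [if_neg]
    rintro ⟨hA, _, hle⟩
    exact hv (hA ▸ hle)

/-! ### The total first payment -/

lemma Rval_eq (n m : ℕ) :
    Rval n m = Nval m * (Bval n m + 1) * Bval n m
        * (n * Bval n m ^ 2 + ∑ i ∈ Finset.range n, (i + 1))
      + 3 * m * (m + 1) * n := by
  unfold Rval
  rw [show n * (n + 1) / 2 = ∑ i ∈ Finset.range n, (i + 1) from by
    rw [← two_Gs n, Nat.mul_div_cancel_left _ (by norm_num)]]
  ring

lemma sum_coef (n m : ℕ) :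
    (∑ i ∈ Finset.range n, (Bval n m ^ 2 + i + 1))
      = n * Bval n m ^ 2 + ∑ i ∈ Finset.range n, (i + 1) := by
  rw [show (fun i => Bval n m ^ 2 + i + 1) = fun i => Bval n m ^ 2 + (i + 1) from by
    funext i; ring]
  rw [Finset.sum_add_distrib, Finset.sum_const, Finset.card_range, smul_eq_mul]

lemma Tot_eq (n m : ℕ) (hn : 0 < n) (hm : 0 < m) (c : Fin m → Fin 3 → Fin n × Bool) :
    (∑ y : Item n m, p1 n m c y) = 2 * Rval n m := by
  rw [swap_var0 n m (p1 n m c)]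
  rw [Finset.sum_congr rfl
    (fun i0 hi => yP_eq n m hn hm c i0 (Finset.mem_range.1 hi))]
  rw [Finset.sum_add_distrib, Finset.sum_const, Finset.card_range, smul_eq_mul]
  rw [show (fun i0 => (Bval n m ^ 2 + i0 + 1) * Bval n m * (2 * Nval m * (Bval n m + 1)))
      = fun i0 => (Bval n m ^ 2 + i0 + 1) * (Bval n m * (2 * Nval m * (Bval n m + 1)))
      from by funext i0; ring]
  rw [← Finset.sum_mul, sum_coef n m, Rval_eq n m]
  ring

/-! ### Consequences of feasibility -/

lemma a1_le {n m : ℕ} (y : Item n m) : a1 y ≤ n := by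
  unfold a1
  have := (itemVar y).isLt
  omega

lemma a2_ge (n m : ℕ) (c : Fin m → Fin 3 → Fin n × Bool) (y : Item n m) :
    n + 1 ≤ a2 n m c y := by
  rcases y with ⟨i, j, k, pos⟩ | ⟨i, l, pos⟩
  · simp only [a2]; split_ifs <;> omega
  · cases pos <;> simp only [a2, if_true, Bool.false_eq_true, if_false] <;>
      split_ifs <;> omega

lemma a2_le (n m : ℕ) (c : Fin m → Fin 3 → Fin n × Bool) (y : Item n m) :
    a2 n m c y ≤ n + m + 2 := by
  rcases y with ⟨i, j, k, pos⟩ | ⟨i, l, pos⟩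
  · have := j.isLt
    simp only [a2]; split_ifs <;> omega
  · cases pos <;> simp only [a2, if_true, Bool.false_eq_true, if_false] <;>
      split_ifs <;> omega

lemma day_n (n m : ℕ) (hn : 0 < n) (c : Fin m → Fin 3 → Fin n × Bool)
    (z : Item n m → Bool) (hz : Feasible n m c z) :
    (∑ y : Item n m, if z y = true then 0 else p1 n m c y) ≤ Rval n m := by
  have h := hz n hn (by omega)
  rw [qv, if_neg (lt_irrefl n), if_pos rfl] at h
  have e : ∀ y : Item n m,
      (if (if z y then a2 n m c y else a1 y) ≤ n then
        (if z y then 2 * p1 n m c y else p1 n m c y) else 0)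
      = (if z y = true then 0 else p1 n m c y) := by
    intro y
    cases hzy : z y
    · simp only [hzy, Bool.false_eq_true, if_false, if_pos (a1_le y)]
    · have := a2_ge n m c y
      simp only [hzy, if_true]
      rw [if_neg (by omega)]
  rw [Finset.sum_congr rfl (fun y _ => e y)] at h
  exact h

lemma day_fin (n m : ℕ) (hn : 0 < n) (hm : 0 < m) (c : Fin m → Fin 3 → Fin n × Bool)
    (z : Item n m → Bool) (hz : Feasible n m c z) :
    (∑ y : Item n m, if z y = true then 2 * p1 n m c y else p1 n m c y)
      ≤ 3 * Rval n m := by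
  have h := hz (n + m + 2) (by omega) le_rfl
  rw [qv, if_neg (by omega), if_neg (by omega), if_neg (by omega), if_neg (by omega)] at h
  have e : ∀ y : Item n m,
      (if (if z y then a2 n m c y else a1 y) ≤ n + m + 2 then
        (if z y then 2 * p1 n m c y else p1 n m c y) else 0)
      = (if z y = true then 2 * p1 n m c y else p1 n m c y) := by
    intro y
    have h1 := a2_le n m c y
    have h2 := a1_le y
    cases hzy : z y <;> simp only [hzy, if_true, Bool.false_eq_true, if_false] <;>
      rw [if_pos (by omega)]
  rw [Finset.sum_congr rfl (fun y _ => e y)] at h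
  exact h

lemma day_v (n m : ℕ) (c : Fin m → Fin 3 → Fin n × Bool)
    (z : Item n m → Bool) (hz : Feasible n m c z) (v : ℕ) (hv1 : 1 ≤ v) (hv2 : v < n) :
    (∑ i0 ∈ Finset.range n, if i0 + 1 ≤ v then eF n m c z i0 else 0)
      ≤ Nval m * (Bval n m + 1) * v * Bval n m ^ 3 + (Bval n m ^ 3 - 1) := by
  have h := hz v hv1 (by omega)
  rw [qv, if_pos hv2] at h
  have e : ∀ y : Item n m,
      (if (if z y then a2 n m c y else a1 y) ≤ v then
        (if z y then 2 * p1 n m c y else p1 n m c y) else 0)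
      = (if z y = false ∧ (itemVar y : ℕ) + 1 ≤ v then p1 n m c y else 0) := by
    intro y
    have h1 := a2_ge n m c y
    cases hzy : z y
    · simp only [hzy, Bool.false_eq_true, if_false, a1, true_and]
    · simp only [hzy, if_true, Bool.true_eq_false, false_and, if_false]
      rw [if_neg (by omega)]
  rw [Finset.sum_congr rfl (fun y _ => e y), swap_day n m c z v] at h
  exact h

lemma dtot_eq (n m : ℕ) (hn : 0 < n) (hm : 0 < m) (c : Fin m → Fin 3 → Fin n × Bool)
    (z : Item n m → Bool) (hz : Feasible n m c z) :
    (∑ i0 ∈ Finset.range n, dF n m c z i0) = Rval n m := by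
  have hE := day_n n m hn c z hz
  have hF := day_fin n m hn hm c z hz
  have hTot := Tot_eq n m hn hm c
  have split1 : (∑ y : Item n m, if z y = true then 0 else p1 n m c y)
      + (∑ y : Item n m, if z y = true then p1 n m c y else 0)
      = ∑ y : Item n m, p1 n m c y := by
    rw [← Finset.sum_add_distrib]
    apply Finset.sum_congr rfl
    intro y _
    cases hzy : z y <;> simp [hzy]
  have split2 : (∑ y : Item n m, if z y = true then 2 * p1 n m c y else p1 n m c y)
      = (∑ y : Item n m, p1 n m c y)
        + (∑ y : Item n m, if z y = true then p1 n m c y else 0) := by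
    rw [← Finset.sum_add_distrib]
    apply Finset.sum_congr rfl
    intro y _
    cases hzy : z y <;> simp [hzy] <;> ring
  have hswap : (∑ y : Item n m, if z y = true then p1 n m c y else 0)
      = ∑ i0 ∈ Finset.range n, dF n m c z i0 := by
    rw [swap_var n m (fun y => z y = true) (p1 n m c)]
    rfl
  rw [hswap] at split1
  rw [split2, hTot] at hF
  rw [hTot] at split1
  rw [hswap] at hF
  omega

lemma sum_a_eq (n m : ℕ) (hn : 0 < n) (hm : 0 < m) (c : Fin m → Fin 3 → Fin n × Bool)
    (z : Item n m → Bool) (hz : Feasible n m c z) :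
    (∑ i0 ∈ Finset.range n, (Bval n m ^ 2 + i0 + 1) * aF n m z i0)
      = ∑ i0 ∈ Finset.range n, (Bval n m ^ 2 + i0 + 1) * (Nval m * (Bval n m + 1)) := by
  have hD := dtot_eq n m hn hm c z hz
  have h1 : (∑ i0 ∈ Finset.range n, dF n m c z i0)
      = Bval n m * (∑ i0 ∈ Finset.range n, (Bval n m ^ 2 + i0 + 1) * aF n m z i0)
        + ∑ i0 ∈ Finset.range n, rF n m c z i0 := by
    rw [Finset.mul_sum, ← Finset.sum_add_distrib]
    apply Finset.sum_congr rfl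
    intro i0 _
    rw [dF_decomp n m c z i0]
    ring
  have h2 : Rval n m
      = Bval n m * (∑ i0 ∈ Finset.range n, (Bval n m ^ 2 + i0 + 1) * (Nval m * (Bval n m + 1)))
        + 3 * m * (m + 1) * n := by
    rw [Rval_eq n m, ← Finset.sum_mul, sum_coef n m]
    ring
  have hr : (∑ i0 ∈ Finset.range n, rF n m c z i0) ≤ n * (6 * m * (m + 1)) := by
    calc (∑ i0 ∈ Finset.range n, rF n m c z i0)
        ≤ ∑ i0 ∈ Finset.range n, 6 * m * (m + 1) := by
          apply Finset.sum_le_sum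
          intro i0 hi
          exact rF_le n m hn hm c z i0 (Finset.mem_range.1 hi)
      _ = n * (6 * m * (m + 1)) := by rw [Finset.sum_const, Finset.card_range, smul_eq_mul]
  have hrB : 6 * m * (m + 1) * n < Bval n m := res_n_lt_B n m hn hm
  have hr2 : (∑ i0 ∈ Finset.range n, rF n m c z i0) < Bval n m := by
    have : n * (6 * m * (m + 1)) = 6 * m * (m + 1) * n := by ring
    omega
  have hq2 : 3 * m * (m + 1) * n < Bval n m := by
    have h3 : 3 * m * (m + 1) * n ≤ 6 * m * (m + 1) * n := by
      have : 3 * m * (m + 1) ≤ 6 * m * (m + 1) :=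
        Nat.mul_le_mul_right _ (Nat.mul_le_mul_right _ (by omega))
      exact Nat.mul_le_mul_right _ this
    omega
  rw [h1, h2] at hD
  have hBpos := B_pos n m hn hm
  -- from B * X + r = B * Y + q with r, q < B we get X = Y
  set X := ∑ i0 ∈ Finset.range n, (Bval n m ^ 2 + i0 + 1) * aF n m z i0 with hX
  set Y := ∑ i0 ∈ Finset.range n, (Bval n m ^ 2 + i0 + 1) * (Nval m * (Bval n m + 1)) with hY
  have hmod : (Bval n m * X + (∑ i0 ∈ Finset.range n, rF n m c z i0)) % Bval n m
      = (Bval n m * Y + 3 * m * (m + 1) * n) % Bval n m := by rw [hD]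
  rw [Nat.mul_add_mod, Nat.mul_add_mod, Nat.mod_eq_of_lt hr2, Nat.mod_eq_of_lt hq2] at hmod
  rw [hmod] at hD
  have := Nat.add_right_cancel hD
  exact Nat.eq_of_mul_eq_mul_left hBpos this

lemma eF_ge (n m : ℕ) (hn : 0 < n) (hm : 0 < m) (c : Fin m → Fin 3 → Fin n × Bool)
    (z : Item n m → Bool) (i0 : ℕ) (h : i0 < n) :
    (Bval n m ^ 2 + i0 + 1) * Bval n m * (2 * Nval m * (Bval n m + 1) - aF n m z i0)
      ≤ eF n m c z i0 := by
  have e1 : eF n m c z i0 + dF n m c z i0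
      = (Bval n m ^ 2 + i0 + 1) * Bval n m * (2 * Nval m * (Bval n m + 1))
        + 6 * m * (m + 1) := by
    rw [ed_split n m c z i0, yP_eq n m hn hm c i0 h]
  have e2 := dF_decomp n m c z i0
  have e3 : (Bval n m ^ 2 + i0 + 1) * Bval n m * (2 * Nval m * (Bval n m + 1) - aF n m z i0)
      + dF n m c z i0
      = (Bval n m ^ 2 + i0 + 1) * Bval n m * (2 * Nval m * (Bval n m + 1))
        + rF n m c z i0 := by
    rw [e2, ← Nat.add_assoc, ← Nat.mul_add, Nat.sub_add_cancel (aF_le n m z i0 h)]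
  have e4 := rF_le n m hn hm c z i0 h
  have e5 : (Bval n m ^ 2 + i0 + 1) * Bval n m * (2 * Nval m * (Bval n m + 1) - aF n m z i0)
      + dF n m c z i0 ≤ eF n m c z i0 + dF n m c z i0 := by
    rw [e3, e1]
    omega
  exact Nat.le_of_add_le_add_right e5

lemma prefix_a (n m : ℕ) (hn : 0 < n) (hm : 0 < m) (c : Fin m → Fin 3 → Fin n × Bool)
    (z : Item n m → Bool) (hz : Feasible n m c z) (v : ℕ) (hv1 : 1 ≤ v) (hv2 : v < n) :
    Nval m * (Bval n m + 1) * v ≤ ∑ i0 ∈ Finset.range v, aF n m z i0 := by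
  have h := day_v n m c z hz v hv1 hv2
  rw [sum_range_ite_le (le_of_lt hv2) (eF n m c z)] at h
  have hchain : Bval n m ^ 3
        * (∑ i0 ∈ Finset.range v, (2 * Nval m * (Bval n m + 1) - aF n m z i0))
      ≤ Nval m * (Bval n m + 1) * v * Bval n m ^ 3 + (Bval n m ^ 3 - 1) := by
    refine le_trans ?_ h
    rw [Finset.mul_sum]
    apply Finset.sum_le_sum
    intro i0 hi
    have hi0 : i0 < n := lt_trans (Finset.mem_range.1 hi) hv2
    refine le_trans ?_ (eF_ge n m hn hm c z i0 hi0)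
    apply Nat.mul_le_mul_right
    have : Bval n m ^ 3 = Bval n m ^ 2 * Bval n m := by ring
    rw [this]
    apply Nat.mul_le_mul_right
    omega
  have hB3 : 0 < Bval n m ^ 3 := Nat.pow_pos (B_pos n m hn hm)
  have hble : (∑ i0 ∈ Finset.range v, (2 * Nval m * (Bval n m + 1) - aF n m z i0))
      ≤ Nval m * (Bval n m + 1) * v := by
    by_contra hc
    push_neg at hc
    have h5 : Bval n m ^ 3 * (Nval m * (Bval n m + 1) * v + 1)
        ≤ Bval n m ^ 3
          * (∑ i0 ∈ Finset.range v, (2 * Nval m * (Bval n m + 1) - aF n m z i0)) :=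
      Nat.mul_le_mul_left _ hc
    have h6 : Bval n m ^ 3 * (Nval m * (Bval n m + 1) * v + 1)
        = Nval m * (Bval n m + 1) * v * Bval n m ^ 3 + Bval n m ^ 3 := by ring
    omega
  have hab : (∑ i0 ∈ Finset.range v, aF n m z i0)
      + (∑ i0 ∈ Finset.range v, (2 * Nval m * (Bval n m + 1) - aF n m z i0))
      = v * (2 * Nval m * (Bval n m + 1)) := by
    rw [← Finset.sum_add_distrib]
    rw [Finset.sum_congr rfl (fun i0 hi => by
      rw [Nat.add_sub_cancel'
        (aF_le n m z i0 (lt_trans (Finset.mem_range.1 hi) hv2))])]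
    rw [Finset.sum_const, Finset.card_range, smul_eq_mul]
  have hvv : v * (2 * Nval m * (Bval n m + 1))
      = Nval m * (Bval n m + 1) * v + Nval m * (Bval n m + 1) * v := by ring
  omega

/-! ### The averaging argument -/

lemma endgame (n C W : ℕ) (a : ℕ → ℕ)
    (hC : n * n * W < C)
    (hub : ∀ i, i < n → a i ≤ 2 * W)
    (heq : ∑ i ∈ Finset.range n, (C + i + 1) * a i = ∑ i ∈ Finset.range n, (C + i + 1) * W)
    (hpre : ∀ v, 1 ≤ v → v < n → W * v ≤ ∑ i ∈ Finset.range v, a i) :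
    ∀ i, i < n → a i = W := by
  set δ : ℕ → ℤ := fun i => (a i : ℤ) - W with hδ
  set D : ℕ → ℤ := fun v => ∑ i ∈ Finset.range v, δ i with hD
  have hDnn : ∀ v, v < n → 0 ≤ D v := by
    intro v hv
    rcases Nat.eq_zero_or_pos v with h | h
    · simp [hD, h]
    · have := hpre v h hv
      have : (W : ℤ) * v ≤ ∑ i ∈ Finset.range v, (a i : ℤ) := by exact_mod_cast this
      simp only [hD, hδ, Finset.sum_sub_distrib, Finset.sum_const, Finset.card_range,
        nsmul_eq_mul]
      have hc : ((v : ℤ)) * W = (W : ℤ) * v := by ring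
      omega
  have hDub : ∀ v, v ≤ n → D v ≤ v * W := by
    intro v hv
    have : D v ≤ ∑ i ∈ Finset.range v, (W : ℤ) := by
      apply Finset.sum_le_sum
      intro i hi
      have hia : a i ≤ 2 * W := hub i (lt_of_lt_of_le (Finset.mem_range.1 hi) hv)
      simp only [hδ]
      omega
    simpa [mul_comm] using this
  have heqZ : ∑ i ∈ Finset.range n, ((C : ℤ) + i + 1) * δ i = 0 := by
    have h1 : ∑ i ∈ Finset.range n, ((C : ℤ) + i + 1) * δ i
        = (∑ i ∈ Finset.range n, ((C : ℤ) + i + 1) * (a i : ℤ))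
          - ∑ i ∈ Finset.range n, ((C : ℤ) + i + 1) * (W : ℤ) := by
      rw [← Finset.sum_sub_distrib]
      apply Finset.sum_congr rfl
      intro i _
      simp only [hδ]
      ring
    rw [h1]
    have h2 : (∑ i ∈ Finset.range n, ((C : ℤ) + i + 1) * (a i : ℤ))
        = ((∑ i ∈ Finset.range n, (C + i + 1) * a i : ℕ) : ℤ) := by
      push_cast
      exact Finset.sum_congr rfl fun x _ => by ring
    have h3 : (∑ i ∈ Finset.range n, ((C : ℤ) + i + 1) * (W : ℤ))
        = ((∑ i ∈ Finset.range n, (C + i + 1) * W : ℕ) : ℤ) := by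
      push_cast
      exact Finset.sum_congr rfl fun x _ => by ring
    rw [h2, h3, heq]
    ring
  -- telescoping
  have htel : ∑ i ∈ Finset.range n, ((i : ℤ) + 1) * δ i
      = n * D n - ∑ i ∈ Finset.range n, D i := by
    have h1 : ∀ i : ℕ, ((i : ℤ) + 1) * D (i + 1) - (i : ℤ) * D i
        = ((i : ℤ) + 1) * δ i + D i := by
      intro i
      have : D (i + 1) = D i + δ i := by
        simp only [hD, Finset.sum_range_succ]
      rw [this]
      ring
    have h2 := Finset.sum_range_sub (fun i => (i : ℤ) * D i) n
    calc ∑ i ∈ Finset.range n, ((i : ℤ) + 1) * δ i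
        = ∑ i ∈ Finset.range n, ((((i : ℤ) + 1) * D (i + 1) - (i : ℤ) * D i) - D i) := by
          apply Finset.sum_congr rfl
          intro i _
          rw [h1 i]
          ring
      _ = (∑ i ∈ Finset.range n, (((i : ℤ) + 1) * D (i + 1) - (i : ℤ) * D i))
          - ∑ i ∈ Finset.range n, D i := by rw [Finset.sum_sub_distrib]
      _ = n * D n - ∑ i ∈ Finset.range n, D i := by
          have h3 : ∀ i : ℕ, ((i : ℤ) + 1) * D (i + 1) - (i : ℤ) * D i
              = (fun j : ℕ => (j : ℤ) * D j) (i + 1) - (fun j : ℕ => (j : ℤ) * D j) i := by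
            intro i; push_cast; ring_nf
          rw [Finset.sum_congr rfl (fun i _ => h3 i), h2]
          simp
  have hsplit : ∑ i ∈ Finset.range n, ((C : ℤ) + i + 1) * δ i
      = C * D n + ∑ i ∈ Finset.range n, ((i : ℤ) + 1) * δ i := by
    have hCD : (C : ℤ) * D n = ∑ i ∈ Finset.range n, (C : ℤ) * δ i := by
      simp only [hD, Finset.mul_sum]
    rw [hCD, ← Finset.sum_add_distrib]
    exact Finset.sum_congr rfl fun i _ => by ring
  rw [hsplit, htel] at heqZ
  -- (C + n) * D n = ∑ D i
  have hkey : ((C : ℤ) + n) * D n = ∑ i ∈ Finset.range n, D i := by linarith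
  have hDsum_nn : 0 ≤ ∑ i ∈ Finset.range n, D i :=
    Finset.sum_nonneg fun i hi => hDnn i (Finset.mem_range.1 hi)
  have hDsum_ub : (∑ i ∈ Finset.range n, D i) ≤ (n : ℤ) * n * W := by
    calc (∑ i ∈ Finset.range n, D i) ≤ ∑ i ∈ Finset.range n, ((n : ℤ) * W) := by
          apply Finset.sum_le_sum
          intro i hi
          have h1 := hDub i (le_of_lt (Finset.mem_range.1 hi))
          have h2 : (i : ℤ) * W ≤ (n : ℤ) * W := by
            apply mul_le_mul_of_nonneg_right _ (by positivity)
            exact_mod_cast le_of_lt (Finset.mem_range.1 hi)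
          linarith
      _ = (n : ℤ) * n * W := by
          rw [Finset.sum_const, Finset.card_range]
          ring
  have hCpos : (0 : ℤ) < (C : ℤ) + n := by
    have : 0 < C := lt_of_le_of_lt (Nat.zero_le _) hC
    positivity
  have hDn0 : D n = 0 := by
    have hge : 0 ≤ D n := by
      by_contra hlt
      push_neg at hlt
      nlinarith
    have hle : D n ≤ 0 := by
      by_contra hlt
      push_neg at hlt
      have h1 : (C : ℤ) + n ≤ ((C : ℤ) + n) * D n := by nlinarith
      have h2 : ((n : ℤ) * n * W) < C := by exact_mod_cast hC
      linarith
    omega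
  have hDall : ∀ i, i < n → D i = 0 := by
    intro i hi
    have h0 : ∑ i ∈ Finset.range n, D i = 0 := by
      rw [← hkey, hDn0]; ring
    have := (Finset.sum_eq_zero_iff_of_nonneg
      (fun j hj => hDnn j (Finset.mem_range.1 hj))).1 h0
    exact this i (Finset.mem_range.2 hi)
  intro i hi
  have hδ0 : δ i = 0 := by
    have h1 : D (i + 1) = D i + δ i := by simp only [hD, Finset.sum_range_succ]
    rcases Nat.lt_or_ge (i + 1) n with h | h
    · have := hDall (i + 1) h
      have := hDall i hi
      omega
    · have hin : i + 1 = n := by omega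
      rw [hin] at h1
      have := hDall i hi
      rw [hDn0] at h1
      omega
  simp only [hδ] at hδ0
  omega

/-! ### The per-variable case analysis -/

lemma cases_st (B N s t e : ℕ) (hNB : N < B) (hs : s ≤ N) (ht : t ≤ N) (he : e ≤ 1)
    (h : (B + 1) * s + B * t + N * e = N * (B + 1)) :
    (s = N ∧ t = 0 ∧ e = 0) ∨ (s = 0 ∧ t = N ∧ e = 1) := by
  have e1 : (B + 1) * s = B * s + s := by ring
  have e2 : N * (B + 1) = N * B + N := by ring
  have e6 : B * N = N * B := by ring
  interval_cases e
  · left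
    have h' : s + B * s + B * t = N * B + N := by omega
    have hu1 : s + t ≤ N := by
      by_contra hc
      push_neg at hc
      have h1 : B * (N + 1) ≤ B * (s + t) := Nat.mul_le_mul_left _ hc
      have e3 : B * (s + t) = B * s + B * t := by ring
      have e4 : B * (N + 1) = N * B + B := by ring
      omega
    have hu2 : N ≤ s + t := by
      by_contra hc
      push_neg at hc
      have h1 : B * (s + t + 1) ≤ B * N := Nat.mul_le_mul_left _ hc
      have e5 : B * (s + t + 1) = B * s + B * t + B := by ring
      omega
    have hu : s + t = N := le_antisymm hu1 hu2
    have e7 : B * (s + t) = B * N := by rw [hu]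
    have e3 : B * (s + t) = B * s + B * t := by ring
    omega
  · right
    have h' : s + B * s + B * t = N * B := by omega
    have hsB : s < B := lt_of_le_of_lt hs hNB
    have hu1 : s + t ≤ N := by
      by_contra hc
      push_neg at hc
      have h1 : B * (N + 1) ≤ B * (s + t) := Nat.mul_le_mul_left _ hc
      have e3 : B * (s + t) = B * s + B * t := by ring
      have e4 : B * (N + 1) = N * B + B := by ring
      omega
    have hu2 : N ≤ s + t := by
      by_contra hc
      push_neg at hc
      have h1 : B * (s + t + 1) ≤ B * N := Nat.mul_le_mul_left _ hc
      have e5 : B * (s + t + 1) = B * s + B * t + B := by ring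
      omega
    have hu : s + t = N := le_antisymm hu1 hu2
    have e7 : B * (s + t) = B * N := by rw [hu]
    have e3 : B * (s + t) = B * s + B * t := by ring
    omega

lemma all_chosen_pos (n m : ℕ) (z : Item n m → Bool) (i0 : ℕ) (h : i0 < n)
    (hsN : sF n m z i0 = Nval m) :
    ∀ y : Item n m, (itemVar y : ℕ) = i0 → itemPos y = true → z y = true := by
  intro y hvar hpos
  by_contra hzy
  have hlt : sF n m z i0 < Nval m := by
    rw [← cntPos n m i0 h]
    apply Finset.sum_lt_sum
    · intro y' _
      split_ifs with h1 h2
      · exact le_rfl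
      · exact absurd ⟨h1.1, h1.2.1⟩ h2
      · exact Nat.zero_le _
      · exact le_rfl
    · refine ⟨y, Finset.mem_univ y, ?_⟩
      rw [if_neg (fun hc => hzy hc.2.2), if_pos ⟨hvar, hpos⟩]
      omega
  omega

lemma all_chosen_neg (n m : ℕ) (z : Item n m → Bool) (i0 : ℕ) (h : i0 < n)
    (htN : tF n m z i0 = Nval m) :
    ∀ y : Item n m, (itemVar y : ℕ) = i0 → itemPos y = false → z y = true := by
  intro y hvar hpos
  by_contra hzy
  have hlt : tF n m z i0 < Nval m := by
    rw [← cntNeg n m i0 h]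
    apply Finset.sum_lt_sum
    · intro y' _
      split_ifs with h1 h2
      · exact le_rfl
      · exact absurd ⟨h1.1, h1.2.1⟩ h2
      · exact Nat.zero_le _
      · exact le_rfl
    · refine ⟨y, Finset.mem_univ y, ?_⟩
      rw [if_neg (fun hc => hzy hc.2.2), if_pos ⟨hvar, hpos⟩]
      omega
  omega

lemma none_chosen_pos (n m : ℕ) (z : Item n m → Bool) (i0 : ℕ)
    (hs0 : sF n m z i0 = 0) :
    ∀ y : Item n m, (itemVar y : ℕ) = i0 → itemPos y = true → ¬(z y = true) := by
  intro y hvar hpos hzy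
  unfold sF at hs0
  have h0 := Finset.sum_eq_zero_iff.1 hs0 y (Finset.mem_univ y)
  rw [if_pos ⟨hvar, hpos, hzy⟩] at h0
  omega

lemma none_chosen_neg (n m : ℕ) (z : Item n m → Bool) (i0 : ℕ)
    (ht0 : tF n m z i0 = 0) :
    ∀ y : Item n m, (itemVar y : ℕ) = i0 → itemPos y = false → ¬(z y = true) := by
  intro y hvar hpos hzy
  unfold tF at ht0
  have h0 := Finset.sum_eq_zero_iff.1 ht0 y (Finset.mem_univ y)
  rw [if_pos ⟨hvar, hpos, hzy⟩] at h0
  omega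

/-- For every feasible solution of the constructed arrears instance `I′` and every
variable index `i`, either `X ∩ Y_i = T_i` or `X ∩ Y_i = T̄_i`. -/
theorem feasible_sol_welldefined (n m : ℕ) (hn : 0 < n) (hm : 0 < m)
    (c : Fin m → Fin 3 → Fin n × Bool)
    (z : Item n m → Bool) (hz : Feasible n m c z) :
    ∀ i : Fin n,
      Xset n m z ∩ Yset n m i = Tset n m i ∨ Xset n m z ∩ Yset n m i = Tbar n m i := by
  have hW := endgame n (Bval n m ^ 2) (Nval m * (Bval n m + 1)) (aF n m z)
    (key_lt_B2 n m hn hm)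
    (fun i hi => by rw [← mul_assoc]; exact aF_le n m z i hi)
    (sum_a_eq n m hn hm c z hz)
    (prefix_a n m hn hm c z hz)
  intro i
  have hai := hW (i : ℕ) i.isLt
  have hsplit := aF_split n m z (i : ℕ)
  have hcase := cases_st (Bval n m) (Nval m) (sF n m z (i : ℕ)) (tF n m z (i : ℕ))
    (epsF n m z (i : ℕ)) (N_lt_B n m hn hm) (sF_le n m z (i : ℕ) i.isLt)
    (tF_le n m z (i : ℕ) i.isLt) (epsF_le n m z (i : ℕ) i.isLt)
    (by rw [← hsplit]; exact hai)
  rcases hcase with ⟨hsN, ht0, -⟩ | ⟨hs0, htN, -⟩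
  · left
    have hall := all_chosen_pos n m z (i : ℕ) i.isLt hsN
    have hnone := none_chosen_neg n m z (i : ℕ) ht0
    ext y
    simp only [Xset, Yset, Tset, Finset.mem_inter, Finset.mem_filter, Finset.mem_univ,
      true_and]
    constructor
    · rintro ⟨hzy, hvar⟩
      refine ⟨hvar, ?_⟩
      cases hpos : itemPos y
      · exact absurd hzy (hnone y (by rw [hvar]) hpos)
      · rfl
    · rintro ⟨hvar, hpos⟩
      exact ⟨hall y (by rw [hvar]) hpos, hvar⟩
  · right
    have hall := all_chosen_neg n m z (i : ℕ) i.isLt htN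
    have hnone := none_chosen_pos n m z (i : ℕ) hs0
    ext y
    simp only [Xset, Yset, Tbar, Finset.mem_inter, Finset.mem_filter, Finset.mem_univ,
      true_and]
    constructor
    · rintro ⟨hzy, hvar⟩
      refine ⟨hvar, ?_⟩
      cases hpos : itemPos y
      · rfl
      · exact absurd hzy (hnone y (by rw [hvar]) hpos)
    · rintro ⟨hvar, hpos⟩
      exact ⟨hall y (by rw [hvar]) hpos, hvar⟩
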